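/- Under the standing assumptions (logarithmic distortion: d_{G/K}((a,F_a(x)),(a,F_a(y))) ≤ C ln d₀(x,y) for all a ∈ ℤ^r and x ≠ y in Δ, and Δ a subgroup of N with inf of positive d₀-distances > 1), the action of Δ on X(Δ) given by g · (a, F_a(h)) = (a, F_a(h g⁻¹)) is a translation-like action: it is free, and for each g ∈ Δ, sup over points of X(Δ) of the displacement is at most C ln d₀(1, g). -/
import Mathlib


/-- The point of `ℝ^r` with integer coordinates `m`. -/
noncomputable def intPt (r : ℕ) (m : Fin r → ℤ) : EuclideanSpace ℝ (Fin r) :=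
  (WithLp.equiv 2 (Fin r → ℝ)).symm (fun i => (m i : ℝ))

/-- Let `Δ` be a cocompact lattice (subgroup) of the nilpotent
group `N` whose left-invariant metric `d₀` separates `Δ` by more than `1`, let
`F_a` be the (injective) dilation maps, and assume the upper logarithmic
distortion bound `d_{G/K}((a,F_a x),(a,F_a y)) ≤ C ln d₀(x,y)` for `a ∈ ℤ^r`
and distinct `x, y ∈ Δ`.  Then the action `g · (a, F_a h) = (a, F_a (h g⁻¹))` of
`Δ` on `X(Δ)` is translation-like: it is free, and for each `g ≠ 1` the
displacement of every point of `X(Δ)` is at most `C ln d₀(1, g)`. -/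
theorem XSet_action_translation_like
    (r : ℕ) {N : Type*} [Group N] [MetricSpace N]
    (hinv : ∀ a b c : N, dist (a * b) (a * c) = dist b c)
    (Δ : Subgroup N)
    (hsep : ∃ s : ℝ, 1 < s ∧ ∀ x ∈ Δ, ∀ y ∈ Δ, x ≠ y → s ≤ dist x y)
    (F : EuclideanSpace ℝ (Fin r) → N → N)
    (hFinj : ∀ a, Function.Injective (F a))
    (dGK : EuclideanSpace ℝ (Fin r) × N → EuclideanSpace ℝ (Fin r) × N → ℝ)
    (C : ℝ) (hC : 0 < C)
    (hlog : ∀ (m : Fin r → ℤ), ∀ x ∈ Δ, ∀ y ∈ Δ, x ≠ y →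
      dGK (intPt r m, F (intPt r m) x) (intPt r m, F (intPt r m) y) ≤
        C * Real.log (dist x y)) :
    (∀ g ∈ Δ, g ≠ 1 → ∀ (m : Fin r → ℤ), ∀ h ∈ Δ,
      (intPt r m, F (intPt r m) (h * g⁻¹)) ≠ (intPt r m, F (intPt r m) h)) ∧
    (∀ g ∈ Δ, g ≠ 1 → ∀ (m : Fin r → ℤ), ∀ h ∈ Δ,
      dGK (intPt r m, F (intPt r m) h) (intPt r m, F (intPt r m) (h * g⁻¹)) ≤
        C * Real.log (dist (1 : N) g)) := by
  have hne : ∀ (g h : N), g ≠ 1 → h * g⁻¹ ≠ h := by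
    intro g h hg he
    have : g⁻¹ = 1 := by
      have := mul_left_cancel (a := h) (b := g⁻¹) (c := 1) (by simpa using he)
      simpa using this
    exact hg (by simpa using congrArg Inv.inv this)
  refine ⟨?_, ?_⟩
  · intro g hg hg1 m h hh he
    exact hne g h hg1 (hFinj (intPt r m) (congrArg Prod.snd he))
  · intro g hg hg1 m h hh
    have key := hlog m h hh (h * g⁻¹) (Δ.mul_mem hh (Δ.inv_mem hg)) (hne g h hg1).symm
    have hd : dist h (h * g⁻¹) = dist (1 : N) g := by
      have h1 : dist h (h * g⁻¹) = dist (1 : N) g⁻¹ := by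
        simpa using hinv h 1 g⁻¹
      have h2 : dist (g * 1) (g * g⁻¹) = dist (1 : N) g⁻¹ := hinv g 1 g⁻¹
      rw [h1, ← h2]
      simp [dist_comm]
    rwa [hd] at key
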